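/- (Main theorem.) Let A be a finite set, M a positive integer, and P a sub-distribution on A. Let {f_X} be a universal₂ ensemble of hash functions from A to {1,…,M}. Then for every s with 0 ≤ s ≤ 1, E_X d₁(P^{f_X(A)}) ≤ 3 · M^{s/(1+s)} · (Σ_{a∈A} P(a)^{1+s})^{1/(1+s)} = 3 M^{s/(1+s)} e^{−H̃_{1+s}(A|P)/(1+s)}. -/

import Mathlib

open Finset

lemma stmt2_arith1 (K M : ℝ) (hK : 0 < K) (hM : 0 < M) (s : ℝ) (hs0 : 0 ≤ s) :
    ((K / M) ^ (1/(1+s)) : ℝ) ^ (-s) * K = M ^ (s/(1+s)) * K ^ (1/(1+s)) := by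
  have h1 : (0:ℝ) < 1 + s := by linarith
  have hd : (0:ℝ) < K / M := div_pos hK hM
  have hT : ((K / M) ^ (1/(1+s)) : ℝ) = Real.exp ((Real.log K - Real.log M) * (1/(1+s))) := by
    rw [Real.rpow_def_of_pos hd, Real.log_div hK.ne' hM.ne']
  rw [hT, ← Real.exp_log hK, ← Real.exp_log hM,
    Real.rpow_def_of_pos (Real.exp_pos _), Real.rpow_def_of_pos (Real.exp_pos _),
    Real.rpow_def_of_pos (Real.exp_pos _), Real.log_exp, Real.log_exp, Real.log_exp,
    ← Real.exp_add, ← Real.exp_add]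
  congr 1
  field_simp
  ring

lemma stmt2_arith2 (K M : ℝ) (hK : 0 < K) (hM : 0 < M) (s : ℝ) (hs0 : 0 ≤ s) :
    M * (((K / M) ^ (1/(1+s)) : ℝ) ^ (1-s) * K) = (M ^ (s/(1+s)) * K ^ (1/(1+s)))^2 := by
  have h1 : (0:ℝ) < 1 + s := by linarith
  have hd : (0:ℝ) < K / M := div_pos hK hM
  have hT : ((K / M) ^ (1/(1+s)) : ℝ) = Real.exp ((Real.log K - Real.log M) * (1/(1+s))) := by
    rw [Real.rpow_def_of_pos hd, Real.log_div hK.ne' hM.ne']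
  rw [hT, ← Real.exp_log hK, ← Real.exp_log hM,
    Real.rpow_def_of_pos (Real.exp_pos _), Real.rpow_def_of_pos (Real.exp_pos _),
    Real.rpow_def_of_pos (Real.exp_pos _), Real.log_exp, Real.log_exp, Real.log_exp,
    sq, ← Real.exp_add, ← Real.exp_add, ← Real.exp_add, ← Real.exp_add]
  congr 1
  field_simp
  ring

/-- **Main theorem.** For a sub-distribution `P` on a finite set `A`, a universal₂
ensemble of hash functions `f : Ω → A → Fin M`, and every `s ∈ [0,1]`, the expected
`L¹` distance of the pushforward to the rescaled uniform distribution is at most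
`3 · M^{s/(1+s)} · (∑ a, P a ^ (1+s))^{1/(1+s)} = 3 M^{s/(1+s)} e^{-H̃_{1+s}(A|P)/(1+s)}`. -/
theorem stmt_2 {A : Type*} [Fintype A] (M : ℕ) (hM : 0 < M)
    (P : A → ℝ) (hP0 : ∀ a, 0 ≤ P a) (hP1 : ∑ a, P a ≤ 1)
    {Ω : Type*} [Fintype Ω] (μ : Ω → ℝ) (hμ0 : ∀ ω, 0 ≤ μ ω) (hμ1 : ∑ ω, μ ω = 1)
    (f : Ω → A → Fin M)
    (huniv : ∀ a a' : A, a ≠ a' →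
      ∑ ω ∈ univ.filter (fun ω => f ω a = f ω a'), μ ω ≤ 1 / M)
    (s : ℝ) (hs0 : 0 ≤ s) (hs1 : s ≤ 1) :
    ∑ ω, μ ω * (∑ m : Fin M,
        |(∑ a ∈ univ.filter (fun a => f ω a = m), P a) - (∑ a, P a) / M|)
      ≤ 3 * (M : ℝ) ^ (s / (1 + s)) * (∑ a, P a ^ (1 + s)) ^ (1 / (1 + s)) := by
  classical
  have hMpos : (0:ℝ) < (M:ℝ) := by exact_mod_cast hM
  have h1s : (0:ℝ) < 1 + s := by linarith
  have hKnn : (0:ℝ) ≤ ∑ a, P a ^ (1 + s) :=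
    sum_nonneg fun a _ => Real.rpow_nonneg (hP0 a) _
  rcases hKnn.eq_or_lt with hK | hK
  · -- degenerate case: all P a = 0
    have hPz : ∀ a, P a = 0 := by
      intro a
      have h := (sum_eq_zero_iff_of_nonneg
        (fun a _ => Real.rpow_nonneg (hP0 a) _)).1 hK.symm a (mem_univ a)
      by_contra hne
      have hpos : 0 < P a := lt_of_le_of_ne (hP0 a) (Ne.symm hne)
      exact absurd h (ne_of_gt (Real.rpow_pos_of_pos hpos _))
    simp only [hPz, sum_const_zero, zero_div, sub_zero, abs_zero, mul_zero]
    positivity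
  · -- main case
    set K := ∑ a, P a ^ (1 + s) with hKdef
    set T : ℝ := (K / M) ^ (1/(1+s)) with hTdef
    have hTpos : 0 < T := Real.rpow_pos_of_pos (div_pos hK hMpos) _
    set Sf := univ.filter (fun a : A => P a ≤ T) with hSfdef
    set Lf := univ.filter (fun a : A => ¬ P a ≤ T) with hLfdef
    set PS := ∑ a ∈ Sf, P a with hPSdef
    set PL := ∑ a ∈ Lf, P a with hPLdef
    set R := (M:ℝ) ^ (s/(1+s)) * K ^ (1/(1+s)) with hRdef
    have hRnn : 0 ≤ R := by positivity
    set QS : Ω → Fin M → ℝ := fun ω m => ∑ a ∈ Sf.filter (fun a => f ω a = m), P a with hQSdef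
    set QL : Ω → Fin M → ℝ := fun ω m => ∑ a ∈ Lf.filter (fun a => f ω a = m), P a with hQLdef
    have hQsplit : ∀ (ω : Ω) (m : Fin M),
        (∑ a ∈ univ.filter (fun a => f ω a = m), P a) = QS ω m + QL ω m := by
      intro ω m
      rw [hQSdef, hQLdef, hSfdef, hLfdef]
      simp only [filter_filter, sum_filter]
      rw [← sum_add_distrib]
      refine sum_congr rfl fun a _ => ?_
      by_cases h : P a ≤ T <;> by_cases h2 : f ω a = m <;> simp [h, h2]
    have hPsplit : (∑ a, P a) = PS + PL :=
      (sum_filter_add_sum_filter_not univ (fun a => P a ≤ T) P).symm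
    have hPSnn : 0 ≤ PS := sum_nonneg fun a _ => hP0 a
    have hPLnn : 0 ≤ PL := sum_nonneg fun a _ => hP0 a
    -- large part bound
    have hLbound : PL ≤ T ^ (-s) * K := by
      have h1 : ∀ a ∈ Lf, P a ≤ T ^ (-s) * P a ^ (1+s) := by
        intro a ha
        have hTa : T < P a := by
          rw [hLfdef] at ha
          exact lt_of_not_ge (mem_filter.1 ha).2
        have hpa : 0 < P a := hTpos.trans hTa
        have h2 : P a ^ (-s) ≤ T ^ (-s) :=
          Real.rpow_le_rpow_of_nonpos hTpos hTa.le (neg_nonpos.mpr hs0)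
        calc P a = P a ^ (-s) * P a ^ (1+s) := by
              rw [← Real.rpow_add hpa]; norm_num
          _ ≤ T ^ (-s) * P a ^ (1+s) :=
              mul_le_mul_of_nonneg_right h2 (Real.rpow_nonneg (hP0 a) _)
      calc PL ≤ ∑ a ∈ Lf, T ^ (-s) * P a ^ (1+s) := sum_le_sum h1
        _ = T ^ (-s) * ∑ a ∈ Lf, P a ^ (1+s) := by rw [mul_sum]
        _ ≤ T ^ (-s) * K := by
            apply mul_le_mul_of_nonneg_left _ (Real.rpow_nonneg hTpos.le _)
            exact sum_le_sum_of_subset_of_nonneg (subset_univ _)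
              (fun a _ _ => Real.rpow_nonneg (hP0 a) _)
    -- small square-sum bound
    have hSbound : ∑ a ∈ Sf, P a ^ 2 ≤ T ^ (1-s) * K := by
      have h1 : ∀ a ∈ Sf, P a ^ 2 ≤ T ^ (1-s) * P a ^ (1+s) := by
        intro a ha
        have hPaT : P a ≤ T := by
          rw [hSfdef] at ha; exact (mem_filter.1 ha).2
        rcases (hP0 a).eq_or_lt with hz | hpa
        · rw [← hz]
          have : (0:ℝ) ^ 2 = 0 := by norm_num
          rw [this]
          positivity
        · have h2 : P a ^ (1-s) ≤ T ^ (1-s) :=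
            Real.rpow_le_rpow (hP0 a) hPaT (by linarith)
          calc P a ^ 2 = P a ^ ((2:ℝ)) := by
                rw [← Real.rpow_natCast (P a) 2]; norm_num
            _ = P a ^ (1-s) * P a ^ (1+s) := by
                rw [← Real.rpow_add hpa]; norm_num
            _ ≤ T ^ (1-s) * P a ^ (1+s) :=
                mul_le_mul_of_nonneg_right h2 (Real.rpow_nonneg (hP0 a) _)
      calc ∑ a ∈ Sf, P a ^ 2 ≤ ∑ a ∈ Sf, T ^ (1-s) * P a ^ (1+s) := sum_le_sum h1
        _ = T ^ (1-s) * ∑ a ∈ Sf, P a ^ (1+s) := by rw [mul_sum]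
        _ ≤ T ^ (1-s) * K := by
            apply mul_le_mul_of_nonneg_left _ (Real.rpow_nonneg hTpos.le _)
            exact sum_le_sum_of_subset_of_nonneg (subset_univ _)
              (fun a _ _ => Real.rpow_nonneg (hP0 a) _)
    -- fiberwise sums
    have hfibS : ∀ ω, ∑ m, QS ω m = PS := fun ω => sum_fiberwise Sf (f ω) P
    have hfibL : ∀ ω, ∑ m, QL ω m = PL := fun ω => sum_fiberwise Lf (f ω) P
    have hQSnn : ∀ ω m, 0 ≤ QS ω m := fun ω m => sum_nonneg fun a _ => hP0 a
    have hQLnn : ∀ ω m, 0 ≤ QL ω m := fun ω m => sum_nonneg fun a _ => hP0 a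
    have hMcard : (Fintype.card (Fin M) : ℝ) = (M:ℝ) := by simp
    -- large part expectation
    have hLexp : ∀ ω, ∑ m, |QL ω m - PL/(M:ℝ)| ≤ 2 * PL := by
      intro ω
      have h1 : ∀ m : Fin M, |QL ω m - PL/(M:ℝ)| ≤ QL ω m + PL/(M:ℝ) := by
        intro m
        rw [abs_sub_le_iff]
        constructor
        · have := div_nonneg hPLnn hMpos.le; linarith [hQLnn ω m]
        · have := hQLnn ω m; have := div_nonneg hPLnn hMpos.le; linarith
      calc ∑ m, |QL ω m - PL/(M:ℝ)| ≤ ∑ m, (QL ω m + PL/(M:ℝ)) := sum_le_sum fun m _ => h1 m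
        _ = PL + (M:ℝ) * (PL/(M:ℝ)) := by
            rw [sum_add_distrib, hfibL, sum_const, card_univ, Fintype.card_fin, nsmul_eq_mul]
        _ = 2 * PL := by field_simp; ring
    -- variance identity per ω
    have hvar : ∀ ω, ∑ m, (QS ω m - PS/(M:ℝ))^2
        = (∑ m, (QS ω m)^2) - PS^2/(M:ℝ) := by
      intro ω
      have hexp : ∀ x : ℝ, (x - PS/(M:ℝ))^2 = x^2 - (2*(PS/(M:ℝ)))*x + (PS/(M:ℝ))^2 := by
        intro x; ring
      simp_rw [hexp]
      rw [sum_add_distrib, sum_sub_distrib, ← mul_sum, hfibS, sum_const, card_univ,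
        Fintype.card_fin, nsmul_eq_mul]
      field_simp
      ring
    -- second moment via universality
    have hsq : ∀ ω, ∑ m, (QS ω m)^2
        = ∑ a ∈ Sf, ∑ a' ∈ Sf, (if f ω a = f ω a' then P a * P a' else 0) := by
      intro ω
      simp only [hQSdef, sq, sum_filter, sum_mul_sum]
      rw [sum_comm]
      refine sum_congr rfl fun a _ => ?_
      rw [sum_comm]
      refine sum_congr rfl fun a' _ => ?_
      rw [Finset.sum_eq_single (f ω a)]
      · by_cases h : f ω a = f ω a'
        · simp [h]
        · rw [if_pos rfl, if_neg (fun e => h e.symm), if_neg h, mul_zero]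
      · intro m _ hm
        rw [if_neg (fun e => hm e.symm), zero_mul]
      · intro h; exact absurd (mem_univ _) h
    have hsecond : ∑ ω, μ ω * ∑ m, (QS ω m)^2 ≤ (∑ a ∈ Sf, P a ^ 2) + PS^2/(M:ℝ) := by
      have step1 : ∑ ω, μ ω * ∑ m, (QS ω m)^2
          = ∑ a ∈ Sf, ∑ a' ∈ Sf,
              (P a * P a') * ∑ ω ∈ univ.filter (fun ω => f ω a = f ω a'), μ ω := by
        simp_rw [hsq, mul_sum]
        rw [sum_comm]
        refine sum_congr rfl fun a _ => ?_
        rw [sum_comm]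
        refine sum_congr rfl fun a' _ => ?_
        rw [sum_filter]
        refine sum_congr rfl fun ω _ => ?_
        by_cases h : f ω a = f ω a' <;> simp [h] <;> ring
      rw [step1]
      have hdiag : ∀ a ∈ Sf,
          ∑ a' ∈ Sf, (P a * P a') * ∑ ω ∈ univ.filter (fun ω => f ω a = f ω a'), μ ω
            ≤ P a ^ 2 + ∑ a' ∈ Sf, P a * P a' / (M:ℝ) := by
        intro a ha
        rw [← Finset.add_sum_erase Sf _ ha]
        have hWaa : ∑ ω ∈ univ.filter (fun ω => f ω a = f ω a), μ ω = 1 := by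
          rw [filter_true_of_mem (fun ω _ => rfl), hμ1]
        have hterm : (P a * P a) * ∑ ω ∈ univ.filter (fun ω => f ω a = f ω a), μ ω
            = P a ^ 2 := by rw [hWaa]; ring
        rw [hterm]
        apply add_le_add (le_refl _)
        have h2 : ∀ a' ∈ Sf.erase a,
            (P a * P a') * ∑ ω ∈ univ.filter (fun ω => f ω a = f ω a'), μ ω
              ≤ P a * P a' / (M:ℝ) := by
          intro a' ha'
          have hne : a ≠ a' := (ne_of_mem_erase ha').symm
          have := huniv a a' hne
          calc (P a * P a') * ∑ ω ∈ univ.filter (fun ω => f ω a = f ω a'), μ ω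
              ≤ (P a * P a') * (1/(M:ℝ)) :=
                mul_le_mul_of_nonneg_left this (mul_nonneg (hP0 a) (hP0 a'))
            _ = P a * P a' / (M:ℝ) := by ring
        calc ∑ a' ∈ Sf.erase a, (P a * P a') * ∑ ω ∈ univ.filter (fun ω => f ω a = f ω a'), μ ω
            ≤ ∑ a' ∈ Sf.erase a, P a * P a' / (M:ℝ) := sum_le_sum h2
          _ ≤ ∑ a' ∈ Sf, P a * P a' / (M:ℝ) :=
              sum_le_sum_of_subset_of_nonneg (erase_subset _ _)
                (fun a' _ _ => div_nonneg (mul_nonneg (hP0 a) (hP0 a')) hMpos.le)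
      calc ∑ a ∈ Sf, ∑ a' ∈ Sf, (P a * P a') * ∑ ω ∈ univ.filter (fun ω => f ω a = f ω a'), μ ω
          ≤ ∑ a ∈ Sf, (P a ^ 2 + ∑ a' ∈ Sf, P a * P a' / (M:ℝ)) := sum_le_sum hdiag
        _ = (∑ a ∈ Sf, P a ^ 2) + PS^2/(M:ℝ) := by
            rw [sum_add_distrib]
            congr 1
            rw [hPSdef, sq, sum_mul_sum, sum_div]
            exact sum_congr rfl fun a _ => by rw [sum_div]
    -- total variance bound
    set V : Fin M → ℝ := fun m => ∑ ω, μ ω * (QS ω m - PS/(M:ℝ))^2 with hVdef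
    have hVnn : ∀ m, 0 ≤ V m := fun m =>
      sum_nonneg fun ω _ => mul_nonneg (hμ0 ω) (sq_nonneg _)
    have hVsum : ∑ m, V m ≤ T ^ (1-s) * K := by
      have h1 : ∑ m, V m = ∑ ω, μ ω * ∑ m, (QS ω m - PS/(M:ℝ))^2 := by
        rw [hVdef, sum_comm]
        exact sum_congr rfl fun ω _ => by rw [mul_sum]
      rw [h1]
      have h2 : ∑ ω, μ ω * ∑ m, (QS ω m - PS/(M:ℝ))^2
          = (∑ ω, μ ω * ∑ m, (QS ω m)^2) - PS^2/(M:ℝ) := by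
        simp_rw [hvar, mul_sub]
        rw [sum_sub_distrib, ← sum_mul, hμ1, one_mul]
      rw [h2]
      have := hsecond
      have := hSbound
      linarith
    -- expected small part
    have hsmall : ∑ ω, μ ω * ∑ m, |QS ω m - PS/(M:ℝ)| ≤ R := by
      have hpm : ∀ m : Fin M, ∑ ω, μ ω * |QS ω m - PS/(M:ℝ)| ≤ Real.sqrt (V m) := by
        intro m
        have cs := sum_mul_sq_le_sq_mul_sq univ (fun ω => Real.sqrt (μ ω))
          (fun ω => Real.sqrt (μ ω) * |QS ω m - PS/(M:ℝ)|)
        have e1 : ∀ ω : Ω, Real.sqrt (μ ω) * (Real.sqrt (μ ω) * |QS ω m - PS/(M:ℝ)|)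
            = μ ω * |QS ω m - PS/(M:ℝ)| := by
          intro ω; rw [← mul_assoc, Real.mul_self_sqrt (hμ0 ω)]
        have e2 : ∀ ω : Ω, (Real.sqrt (μ ω))^2 = μ ω := fun ω => Real.sq_sqrt (hμ0 ω)
        have e3 : ∀ ω : Ω, (Real.sqrt (μ ω) * |QS ω m - PS/(M:ℝ)|)^2
            = μ ω * (QS ω m - PS/(M:ℝ))^2 := by
          intro ω; rw [mul_pow, Real.sq_sqrt (hμ0 ω), sq_abs]
        simp_rw [e1, e2, e3] at cs
        rw [hμ1, one_mul] at cs
        have hnn : 0 ≤ ∑ ω, μ ω * |QS ω m - PS/(M:ℝ)| :=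
          sum_nonneg fun ω _ => mul_nonneg (hμ0 ω) (abs_nonneg _)
        exact (Real.le_sqrt hnn (sum_nonneg fun ω _ =>
          mul_nonneg (hμ0 ω) (sq_nonneg _))).mpr cs
      have hswap : ∑ ω, μ ω * ∑ m, |QS ω m - PS/(M:ℝ)|
          = ∑ m, ∑ ω, μ ω * |QS ω m - PS/(M:ℝ)| := by
        rw [sum_comm]
        exact sum_congr rfl fun ω _ => by rw [mul_sum]
      rw [hswap]
      have cs2 := sum_mul_sq_le_sq_mul_sq univ (fun _ : Fin M => (1:ℝ))
        (fun m => Real.sqrt (V m))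
      simp only [one_mul, one_pow, Real.sq_sqrt (hVnn _)] at cs2
      rw [sum_const, card_univ, Fintype.card_fin, nsmul_eq_mul, mul_one] at cs2
      have step : ∑ m, Real.sqrt (V m) ≤ Real.sqrt ((M:ℝ) * ∑ m, V m) := by
        have hnn : 0 ≤ ∑ m, Real.sqrt (V m) :=
          sum_nonneg fun m _ => Real.sqrt_nonneg _
        exact (Real.le_sqrt hnn (mul_nonneg hMpos.le
          (sum_nonneg fun m _ => hVnn m))).mpr cs2
      calc ∑ m, ∑ ω, μ ω * |QS ω m - PS/(M:ℝ)|
          ≤ ∑ m, Real.sqrt (V m) := sum_le_sum fun m _ => hpm m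
        _ ≤ Real.sqrt ((M:ℝ) * ∑ m, V m) := step
        _ ≤ Real.sqrt ((M:ℝ) * (T ^ (1-s) * K)) := by
            apply Real.sqrt_le_sqrt
            exact mul_le_mul_of_nonneg_left hVsum hMpos.le
        _ = R := by
            rw [hTdef, stmt2_arith2 K (M:ℝ) hK hMpos s hs0, Real.sqrt_sq hRnn]
    -- put everything together
    have hmain : ∑ ω, μ ω * (∑ m : Fin M,
        |(∑ a ∈ univ.filter (fun a => f ω a = m), P a) - (∑ a, P a) / M|)
        ≤ (∑ ω, μ ω * ∑ m, |QS ω m - PS/(M:ℝ)|) + (∑ ω, μ ω * ∑ m, |QL ω m - PL/(M:ℝ)|) := by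
      rw [← sum_add_distrib]
      refine sum_le_sum fun ω _ => ?_
      rw [← mul_add]
      refine mul_le_mul_of_nonneg_left ?_ (hμ0 ω)
      rw [← sum_add_distrib]
      refine sum_le_sum fun m _ => ?_
      rw [hQsplit ω m, hPsplit, add_div]
      calc |QS ω m + QL ω m - (PS/(M:ℝ) + PL/(M:ℝ))|
          = |(QS ω m - PS/(M:ℝ)) + (QL ω m - PL/(M:ℝ))| := by congr 1; ring
        _ ≤ |QS ω m - PS/(M:ℝ)| + |QL ω m - PL/(M:ℝ)| := abs_add_le _ _
    have hlarge : ∑ ω, μ ω * ∑ m, |QL ω m - PL/(M:ℝ)| ≤ 2 * R := by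
      calc ∑ ω, μ ω * ∑ m, |QL ω m - PL/(M:ℝ)|
          ≤ ∑ ω, μ ω * (2 * PL) :=
            sum_le_sum fun ω _ => mul_le_mul_of_nonneg_left (hLexp ω) (hμ0 ω)
        _ = 2 * PL := by rw [← sum_mul, hμ1, one_mul]
        _ ≤ 2 * (T ^ (-s) * K) := by linarith
        _ = 2 * R := by rw [hTdef, stmt2_arith1 K (M:ℝ) hK hMpos s hs0]
    calc ∑ ω, μ ω * (∑ m : Fin M,
        |(∑ a ∈ univ.filter (fun a => f ω a = m), P a) - (∑ a, P a) / M|)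
        ≤ (∑ ω, μ ω * ∑ m, |QS ω m - PS/(M:ℝ)|)
            + (∑ ω, μ ω * ∑ m, |QL ω m - PL/(M:ℝ)|) := hmain
      _ ≤ R + 2 * R := add_le_add hsmall hlarge
      _ = 3 * (M : ℝ) ^ (s / (1 + s)) * K ^ (1 / (1 + s)) := by rw [hRdef]; ring
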